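/- The pullback of the split metric dS² = 2dc₁dc₅ + 2dc₂dc₄ under the map φ : (c₁,c₂,c₄,c₅) ↦ ((c₁c₅+c₂c₄)/(3c₄), c₅/c₄, c₁/c₄, −3/c₄) equals (1/c₄²)·dS², i.e. φ is a conformal transformation with conformal factor 1/c₄². Equivalently, 2d((c₁c₅+c₂c₄)/(3c₄))·d(−3/c₄) + 2d(c₅/c₄)·d(c₁/c₄) = (1/c₄²)(2dc₁dc₅ + 2dc₂dc₄). -/

import Mathlib

/-- φ is conformal for `dS² = 2dc₁dc₅ + 2dc₂dc₄` with factor `1/c₄²`: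
the pullback quadratic form evaluated on any tangent vector `u` at a point `x`
with `c₄ ≠ 0` equals `(1/c₄²)(2u₁u₅ + 2u₂u₄)`.  Coordinates `(c₁,c₂,c₄,c₅)` are
indices `(0,1,2,3)`. -/
theorem stmt7 (x : Fin 4 → ℝ) (hx : x 2 ≠ 0) (u : Fin 4 → ℝ) :
    2 * (fderiv ℝ (fun y : Fin 4 → ℝ => (y 0 * y 3 + y 1 * y 2) / (3 * y 2)) x u) *
          (fderiv ℝ (fun y : Fin 4 → ℝ => -3 / y 2) x u)
      + 2 * (fderiv ℝ (fun y : Fin 4 → ℝ => y 3 / y 2) x u) *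
          (fderiv ℝ (fun y : Fin 4 → ℝ => y 0 / y 2) x u)
      = (1 / (x 2) ^ 2) * (2 * u 0 * u 3 + 2 * u 1 * u 2) := by
  have h0 := hasFDerivAt_apply (𝕜 := ℝ) (0 : Fin 4) x
  have h1 := hasFDerivAt_apply (𝕜 := ℝ) (1 : Fin 4) x
  have h2 := hasFDerivAt_apply (𝕜 := ℝ) (2 : Fin 4) x
  have h3 := hasFDerivAt_apply (𝕜 := ℝ) (3 : Fin 4) x
  have hden : (3 : ℝ) * x 2 ≠ 0 := by positivity
  have hI2 := (hasFDerivAt_inv' (𝕜 := ℝ) hx).comp x h2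
  have hI2' := (hasFDerivAt_inv' (𝕜 := ℝ) hden).comp x (h2.const_mul 3)
  simp only [Function.comp_def] at hI2 hI2'
  simp only [div_eq_mul_inv]
  have hA := ((h0.mul h3).add (h1.mul h2)).mul hI2'
  have hB := hI2.const_mul (-3 : ℝ)
  have hC := h3.mul hI2
  have hD := h0.mul hI2
  rw [(show HasFDerivAt (fun y : Fin 4 → ℝ => (y 0 * y 3 + y 1 * y 2) * (3 * y 2)⁻¹) _ x from hA).fderiv,
    hB.fderiv,
    (show HasFDerivAt (fun y : Fin 4 → ℝ => y 3 * (y 2)⁻¹) _ x from hC).fderiv,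
    (show HasFDerivAt (fun y : Fin 4 → ℝ => y 0 * (y 2)⁻¹) _ x from hD).fderiv]
  simp only [ContinuousLinearMap.coe_smul', ContinuousLinearMap.add_apply,
    ContinuousLinearMap.coe_comp', Function.comp_apply, ContinuousLinearMap.neg_apply,
    ContinuousLinearMap.smul_apply, Pi.smul_apply, ContinuousLinearMap.proj_apply,
    smul_eq_mul, ContinuousLinearMap.mulLeftRight_apply, Pi.mul_apply, Pi.add_apply]
  field_simp
  ring
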